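/- Let B be an integral domain and let A = [A^{ij}] ⊆ M_d(B) be a tiled matrix ring. Fix indices i, j, k ∈ {1,…,d} and suppose that A^{ij} ≠ 0, A^{ji} ≠ 0, and A^{ii}·1_d = Z(A). Then for every Z(A)-module homomorphism f : e_jAe_i → e_kAe_i there exists an element h ∈ Frac(B) such that for every p ∈ e_jAe_i one has \overline{f(p)} = h·p̄ in Frac(B). -/

import Mathlib

open Matrix

/-- The corner space `e_a A e_b` of a subring `A` of a matrix ring, where
`e_a = stdBasisMatrix a a 1` is the idempotent at index `a`. -/
def cornerSet {B : Type*} [CommRing B] {d : ℕ}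
    (A : Set (Matrix (Fin d) (Fin d) B)) (a b : Fin d) :
    Set (Matrix (Fin d) (Fin d) B) :=
  {M | ∃ N ∈ A, M = Matrix.single a a 1 * N * Matrix.single b b 1}

/-- `z` is an element of the center `Z(A)`. -/
def IsCenterElt {B : Type*} [CommRing B] {d : ℕ}
    (A : Set (Matrix (Fin d) (Fin d) B)) (z : Matrix (Fin d) (Fin d) B) : Prop :=
  z ∈ A ∧ ∀ a ∈ A, z * a = a * z

/-- `f` represents a `Z(A)`-module homomorphism `e_j A e_i → e_k A e_i`:
it maps the corner `e_j A e_i` into the corner `e_k A e_i`, is additive, and is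
`Z(A)`-linear (the `Z(A)`-action being multiplication in the matrix ring). -/
def IsCornerZHom {B : Type*} [CommRing B] {d : ℕ}
    (A : Set (Matrix (Fin d) (Fin d) B)) (j i k : Fin d)
    (f : Matrix (Fin d) (Fin d) B → Matrix (Fin d) (Fin d) B) : Prop :=
  (∀ M ∈ cornerSet A j i, f M ∈ cornerSet A k i) ∧
  (∀ M ∈ cornerSet A j i, ∀ N ∈ cornerSet A j i, f (M + N) = f M + f N) ∧
  (∀ z, IsCenterElt A z → ∀ M ∈ cornerSet A j i, f (z * M) = z * f M)

/-- Let `B` be an integral domain and `A = [A^{ij}] ⊆ M_d(B)` a tiled matrix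
ring (the set of matrices whose `(a,b)` entry lies in the additive subgroup `T a b`).
Suppose `A^{ij} ≠ 0`, `A^{ji} ≠ 0` and `A^{ii}·1_d = Z(A)`.  Then for every `Z(A)`-module
homomorphism `f : e_j A e_i → e_k A e_i` there is some `h ∈ Frac B` such that
`\overline{f(p)} = h · p̄` for every `p ∈ e_j A e_i`. -/
private lemma corner_calc {B : Type*} [CommRing B] {d : ℕ} (a b : Fin d)
    (N : Matrix (Fin d) (Fin d) B) :
    Matrix.single a a (1:B) * N * Matrix.single b b 1 = N a b • Matrix.single a b 1 := by
  ext p q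
  simp [mul_apply, Matrix.single, ite_and, smul_ite]
  aesop

private lemma single_mul {B : Type*} [CommRing B] {d : ℕ} (a b c : Fin d) (x y : B) :
    (x • Matrix.single a b (1:B)) * (y • Matrix.single b c 1) = (x*y) • Matrix.single a c 1 := by
  rw [smul_mul_assoc, mul_smul_comm, single_mul_single_same, smul_smul]
  simp


theorem corner_hom_is_multiplication {B : Type*} [CommRing B] [IsDomain B] {d : ℕ}
    (T : Fin d → Fin d → AddSubgroup B)
    (A : Subring (Matrix (Fin d) (Fin d) B))
    (hA : ∀ M, M ∈ A ↔ ∀ a b, M a b ∈ T a b)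
    (i j k : Fin d)
    (hij : T i j ≠ ⊥) (hji : T j i ≠ ⊥)
    (hZ : ∀ z, IsCenterElt (A : Set (Matrix (Fin d) (Fin d) B)) z ↔
      ∃ s ∈ T i i, z = s • (1 : Matrix (Fin d) (Fin d) B))
    (f : Matrix (Fin d) (Fin d) B → Matrix (Fin d) (Fin d) B)
    (hf : IsCornerZHom (A : Set (Matrix (Fin d) (Fin d) B)) j i k f) :
    ∃ h : FractionRing B,
      ∀ M ∈ cornerSet (A : Set (Matrix (Fin d) (Fin d) B)) j i,
        algebraMap B (FractionRing B) (f M k i)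
          = h * algebraMap B (FractionRing B) (M j i) := by
  -- elements to work with
  obtain ⟨x, hxT, hx0⟩ : ∃ x ∈ T i j, x ≠ 0 := by
    rcases AddSubgroup.bot_or_exists_ne_zero (T i j) with h'|h'
    · exact absurd h' hij
    · tauto
  obtain ⟨y, hyT, hy0⟩ : ∃ y ∈ T j i, y ≠ 0 := by
    rcases AddSubgroup.bot_or_exists_ne_zero (T j i) with h'|h'
    · exact absurd h' hji
    · tauto
  -- membership of "single entry" matrices in A
  have singleA : ∀ (a b : Fin d) (c : B), c ∈ T a b →
      (c • Matrix.single a b (1:B)) ∈ A := by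
    intro a b c hc
    rw [hA]
    intro p q
    by_cases hpq : a = p ∧ b = q
    · obtain ⟨rfl, rfl⟩ := hpq
      simpa [Matrix.single] using hc
    · have : (c • Matrix.single a b (1:B)) p q = 0 := by
        simp only [Matrix.smul_apply, Matrix.single, of_apply, smul_eq_mul]
        rw [if_neg hpq, mul_zero]
      rw [this]; exact (T p q).zero_mem
  -- products land in T i i
  have prodT : ∀ m ∈ T j i, x * m ∈ T i i := by
    intro m hm
    have hmul : (x • Matrix.single i j (1:B)) * (m • Matrix.single j i 1) ∈ A :=
      A.mul_mem (singleA _ _ _ hxT) (singleA _ _ _ hm)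
    rw [single_mul] at hmul
    have := (hA _).1 hmul i i
    simpa [Matrix.single] using this
  -- central elements
  have central : ∀ m ∈ T j i,
      IsCenterElt (A : Set (Matrix (Fin d) (Fin d) B)) ((x*m) • (1 : Matrix (Fin d) (Fin d) B)) := by
    intro m hm
    exact (hZ _).2 ⟨x*m, prodT m hm, rfl⟩
  -- representation of corner elements
  have corner_repr : ∀ M ∈ cornerSet (A : Set (Matrix (Fin d) (Fin d) B)) j i,
      M = (M j i) • Matrix.single j i 1 ∧ M j i ∈ T j i := by
    intro M hM
    obtain ⟨N, hN, rfl⟩ := hM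
    rw [corner_calc]
    have hNT := (hA _).1 hN j i
    constructor
    · congr 1
      simp [Matrix.single]
    · simpa [Matrix.single] using hNT
  -- base point M0
  set M0 : Matrix (Fin d) (Fin d) B := y • Matrix.single j i 1 with hM0def
  have hM0A : M0 ∈ A := singleA _ _ _ hyT
  have hM0c : M0 ∈ cornerSet (A : Set (Matrix (Fin d) (Fin d) B)) j i := by
    refine ⟨M0, hM0A, ?_⟩
    rw [corner_calc, hM0def]
    congr 1
    simp [Matrix.single]
  -- the key B-level identity
  have key : ∀ M ∈ cornerSet (A : Set (Matrix (Fin d) (Fin d) B)) j i,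
      (M j i) * (f M0 k i) = y * (f M k i) := by
    intro M hM
    obtain ⟨hrep, hmT⟩ := corner_repr M hM
    set m := M j i with hm
    have h1 : f (((x*m) • (1 : Matrix (Fin d) (Fin d) B)) * M0)
        = ((x*m) • (1 : Matrix (Fin d) (Fin d) B)) * f M0 :=
      hf.2.2 _ (central m hmT) M0 hM0c
    have h2 : f (((x*y) • (1 : Matrix (Fin d) (Fin d) B)) * M)
        = ((x*y) • (1 : Matrix (Fin d) (Fin d) B)) * f M :=
      hf.2.2 _ (central y hyT) M hM
    have heq : ((x*m) • (1 : Matrix (Fin d) (Fin d) B)) * M0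
        = ((x*y) • (1 : Matrix (Fin d) (Fin d) B)) * M := by
      rw [smul_mul_assoc, one_mul, smul_mul_assoc, one_mul, hM0def, hrep,
        smul_smul, smul_smul]
      ring_nf
    have h3 : ((x*m) • (1 : Matrix (Fin d) (Fin d) B)) * f M0
        = ((x*y) • (1 : Matrix (Fin d) (Fin d) B)) * f M := by
      rw [← h1, ← h2, heq]
    rw [smul_mul_assoc, one_mul, smul_mul_assoc, one_mul] at h3
    have h4 : (x*m) * (f M0 k i) = (x*y) * (f M k i) := by
      have := congrFun (congrFun h3 k) i
      simpa using this
    have h5 : x * (m * f M0 k i) = x * (y * f M k i) := by linear_combination h4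
    exact mul_left_cancel₀ hx0 h5
  -- construct h
  have hyne : algebraMap B (FractionRing B) y ≠ 0 := by
    simpa using (map_ne_zero_iff _ (IsFractionRing.injective B (FractionRing B))).2 hy0
  refine ⟨algebraMap B (FractionRing B) (f M0 k i) / algebraMap B (FractionRing B) y,
    fun M hM => ?_⟩
  have hk := key M hM
  field_simp
  rw [← _root_.map_mul, ← _root_.map_mul]
  exact congrArg _ (by linear_combination -hk)
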